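/- Let T* be a cochain complex of Hilbert spaces of the form T^k = H^k ⊕ A^{k-1} (with A^{-1} = 0), where H* carries a closed densely defined differential ∂ and A* are finite-dimensional. Let γ : Dom(∂^k) → A^k be linear maps with γ ∘ ∂ = 0. Define two differentials: d̃(ω,a) = (∂ω, γ(ω)) and d(ω,a) = (∂ω, γ(P ω)), where P is the orthogonal projection onto ker(Δ^k) = ker(∂^k) ∩ ker((∂^{k-1})*), assuming a Hodge decomposition Dom(∂^k) = ker(Δ^k) ⊕ im(∂^{k-1}) ⊕ (Dom(∂^k) ∩ im(∂*^k)) holds with im(∂^{k-1}) closed. Then the map m(h, ω₁, ω₂, a) = (h, ω₁, ω₂, a + γ(I⁻¹ ω₁)), where I is the isomorphism im(∂*) ∩ Dom(∂) → im(∂) induced by ∂, is a cochain isomorphism from (T, d) to (T, d̃). -/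

import Mathlib

private lemma proj_unique {E : Type*} [NormedAddCommGroup E] [InnerProductSpace ℂ E]
    (K : Submodule ℂ E) (Q : E →L[ℂ] E)
    (hQmem : ∀ x, Q x ∈ K) (hQorth : ∀ x, x - Q x ∈ Kᗮ)
    (x a : E) (ha : a ∈ K) (hxa : x - a ∈ Kᗮ) : Q x = a := by
  have h1 : Q x - a ∈ K := K.sub_mem (hQmem x) ha
  have h2 : Q x - a ∈ Kᗮ := by
    have h3 := Kᗮ.sub_mem hxa (hQorth x)
    have : (x - a) - (x - Q x) = Q x - a := by abel
    rwa [this] at h3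
  have h4 := (Submodule.mem_orthogonal K (Q x - a)).1 h2 _ h1
  rwa [inner_self_eq_zero, sub_eq_zero] at h4

/-- Let `T* ` be a cochain complex of Hilbert spaces of the form
`Tᵏ = Hᵏ ⊕ Aᵏ⁻¹`, where `H*` carries a closed densely defined differential `∂` (denoted
`D`, mapping `Dom ∂ᵏ` into `Dom ∂ᵏ⁺¹`) and the `Aᵏ` are finite dimensional.  Let
`γ : Dom ∂ᵏ → Aᵏ` be linear maps with `γ ∘ ∂ = 0`.  Assume the Hodge decomposition
`Dom ∂ᵏ = ker Δᵏ ⊕ im ∂ᵏ⁻¹ ⊕ (Dom ∂ᵏ ∩ im ∂*)` holds with `im ∂ᵏ⁻¹` closed, where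
`ker Δᵏ = ker ∂ᵏ ∩ ker (∂ᵏ⁻¹)* = ker ∂ᵏ ∩ (im ∂ᵏ⁻¹)ᗮ`, let `P` be the orthogonal
projection onto `ker Δᵏ`, and define the differentials `d̃ (ω, a) = (∂ω, γ ω)` and
`d (ω, a) = (∂ω, γ (P ω))`.  Then the map
`m (h, ω₁, ω₂, a) = (h, ω₁, ω₂, a + γ (I⁻¹ ω₁))` — realized below as
`(ω, a) ↦ (ω, a + γ (ι (P_R ω)))`, where `P_R` is the orthogonal projection onto the
range component and `ι = I⁻¹` inverts `∂ : im ∂* ∩ Dom ∂ ≅ im ∂` — is a cochain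
isomorphism from `(T, d)` to `(T, d̃)`. -/
theorem stmt7
    (H A : ℕ → Type*)
    [∀ k, NormedAddCommGroup (H k)] [∀ k, InnerProductSpace ℂ (H k)]
    [∀ k, CompleteSpace (H k)]
    [∀ k, AddCommGroup (A k)] [∀ k, Module ℂ (A k)] [∀ k, FiniteDimensional ℂ (A k)]
    (Dom : ∀ k, Submodule ℂ (H k))
    (hdense : ∀ k, Dense ((Dom k : Submodule ℂ (H k)) : Set (H k)))
    (D : ∀ k, (Dom k : Submodule ℂ (H k)) →ₗ[ℂ] (Dom (k + 1) : Submodule ℂ (H (k + 1))))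
    (hcomplex : ∀ k (x : Dom k), D (k + 1) (D k x) = 0)
    (hDclosed : ∀ k, IsClosed {p : H k × H (k + 1) |
      ∃ h : p.1 ∈ Dom k, ((D k ⟨p.1, h⟩ : Dom (k + 1)) : H (k + 1)) = p.2})
    (γ : ∀ k, (Dom k : Submodule ℂ (H k)) →ₗ[ℂ] A k)
    (hγ : ∀ k (x : Dom k), γ (k + 1) (D k x) = 0)
    -- `R k = im ∂ᵏ⁻¹ ⊆ H k`, a closed subspace:
    (R : ∀ k, Submodule ℂ (H k)) (hR0 : R 0 = ⊥)
    (hR : ∀ k, R (k + 1) =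
      Submodule.map (Dom (k + 1)).subtype (LinearMap.range (D k)))
    (hRclosed : ∀ k, IsClosed ((R k : Submodule ℂ (H k)) : Set (H k)))
    -- `K k = ker Δᵏ = ker ∂ᵏ ∩ (im ∂ᵏ⁻¹)ᗮ`:
    (K : ∀ k, Submodule ℂ (H k))
    (hK : ∀ k, K k = Submodule.map (Dom k).subtype (LinearMap.ker (D k)) ⊓ (R k)ᗮ)
    (hKDom : ∀ k, ((K k : Submodule ℂ (H k)) : Set (H k)) ⊆ (Dom k : Set (H k)))
    -- `S k = Dom ∂ᵏ ∩ im ∂*`, the third Hodge summand: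
    (S : ∀ k, Submodule ℂ (H k))
    (hSDom : ∀ k, ((S k : Submodule ℂ (H k)) : Set (H k)) ⊆ (Dom k : Set (H k)))
    (hSK : ∀ k, ∀ x ∈ S k, ∀ y ∈ K k, (inner ℂ x y : ℂ) = 0)
    (hSR : ∀ k, ∀ x ∈ S k, ∀ y ∈ R k, (inner ℂ x y : ℂ) = 0)
    -- the Hodge decomposition `Dom ∂ᵏ = K ⊕ R ⊕ S`:
    (hHodge : ∀ k, ∀ x ∈ Dom k,
      ∃ h ∈ K k, ∃ r ∈ R k, ∃ s ∈ S k, x = h + r + s)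
    -- `P k` is the orthogonal projection onto `K k = ker Δᵏ`:
    (P : ∀ k, H k →L[ℂ] H k)
    (hPmem : ∀ k (x : H k), P k x ∈ K k)
    (hPorth : ∀ k (x : H k), x - P k x ∈ (K k)ᗮ)
    -- `PR k` is the orthogonal projection onto `R k = im ∂`:
    (PR : ∀ k, H k →L[ℂ] H k)
    (hPRmem : ∀ k (x : H k), PR k x ∈ R k)
    (hPRorth : ∀ k (x : H k), x - PR k x ∈ (R k)ᗮ)
    -- `ι k = I⁻¹`, the inverse of the isomorphism `I : S k → R (k+1)` induced by `∂`:
    (ι : ∀ k, H (k + 1) →ₗ[ℂ] (Dom k : Submodule ℂ (H k)))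
    (hι : ∀ k (y : H (k + 1)), y ∈ R (k + 1) →
      ((ι k y : H k) ∈ S k ∧ ((D k (ι k y) : Dom (k + 1)) : H (k + 1)) = y)) :
    -- `m` is a linear isomorphism in each degree …
    (∀ k, Function.Bijective (fun p : (Dom (k + 1) : Submodule ℂ (H (k + 1))) × A k =>
      (p.1, p.2 + γ k (ι k (PR (k + 1) (p.1 : H (k + 1))))))) ∧
    -- … and `m ∘ d = d̃ ∘ m`, i.e. applying `m` to `d (ω, a) = (∂ω, γ (P ω))` gives
    -- `d̃ (m (ω, a)) = (∂ω, γ ω)`: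
    (∀ k (ω : Dom k),
      γ k ⟨P k (ω : H k), hKDom k (hPmem k (ω : H k))⟩ +
        γ k (ι k (PR (k + 1) ((D k ω : Dom (k + 1)) : H (k + 1)))) = γ k ω) := by
  constructor
  · intro k
    constructor
    · rintro ⟨x1, x2⟩ ⟨y1, y2⟩ h
      simp only [Prod.mk.injEq] at h
      obtain ⟨h1, h2⟩ := h
      subst h1
      simp only [add_left_inj] at h2
      simp [h2]
    · rintro ⟨x1, x2⟩
      exact ⟨(x1, x2 - γ k (ι k (PR (k + 1) (x1 : H (k + 1))))), by simp⟩
  · intro k ω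
    obtain ⟨h, hhK, r, hrR, s, hsS, hsum⟩ := hHodge k ω ω.2
    have hh : h ∈ Dom k := hKDom k hhK
    have hs : s ∈ Dom k := hSDom k hsS
    have hr : r ∈ Dom k := by
      have : r = (ω : H k) - h - s := by rw [hsum]; abel
      rw [this]; exact (Dom k).sub_mem ((Dom k).sub_mem ω.2 hh) hs
    set ωh : Dom k := ⟨h, hh⟩ with hωh
    set ωr : Dom k := ⟨r, hr⟩ with hωr
    set ωs : Dom k := ⟨s, hs⟩ with hωs
    have hsplit : ω = ωh + ωr + ωs := Subtype.ext hsum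
    -- P ω = h
    have hPw : P k (ω : H k) = h := by
      refine proj_unique (K k) (P k) (hPmem k) (hPorth k) _ _ hhK ?_
      have hrs : (ω : H k) - h = r + s := by rw [hsum]; abel
      rw [hrs]
      refine (K k)ᗮ.add_mem ?_ ?_
      · rw [Submodule.mem_orthogonal]
        intro u hu
        have hu' : u ∈ (R k)ᗮ := ((hK k ▸ hu).2)
        have h0 := (Submodule.mem_orthogonal (R k) u).1 hu' r hrR
        rw [← inner_conj_symm, h0, map_zero]
      · rw [Submodule.mem_orthogonal]
        intro u hu
        have := hSK k s hsS u hu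
        rw [← inner_conj_symm, this, map_zero]
    -- D of the pieces
    have hDh : D k ωh = 0 := by
      have := (hK k ▸ hhK).1
      obtain ⟨x, hx, hxe⟩ := this
      have : ωh = x := Subtype.ext hxe.symm
      rw [this]; exact hx
    have hDr : D k ωr = 0 := by
      cases k with
      | zero =>
        have : r = 0 := by simpa [hR0] using hrR
        have : ωr = 0 := Subtype.ext this
        rw [this, map_zero]
      | succ j =>
        obtain ⟨x, ⟨y, hy⟩, hxe⟩ := (hR j) ▸ hrR
        have : ωr = x := Subtype.ext hxe.symm
        rw [this, ← hy]
        exact hcomplex j y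
    have hγr : γ k ωr = 0 := by
      cases k with
      | zero =>
        have : r = 0 := by simpa [hR0] using hrR
        have : ωr = 0 := Subtype.ext this
        rw [this, map_zero]
      | succ j =>
        obtain ⟨x, ⟨y, hy⟩, hxe⟩ := (hR j) ▸ hrR
        have : ωr = x := Subtype.ext hxe.symm
        rw [this, ← hy]
        exact hγ j y
    have hDω : D k ω = D k ωs := by
      rw [hsplit, map_add, map_add, hDh, hDr, zero_add, zero_add]
    have hDωR : ((D k ω : Dom (k + 1)) : H (k + 1)) ∈ R (k + 1) := by
      rw [hR k]
      exact ⟨D k ω, ⟨ω, rfl⟩, rfl⟩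
    have hPRω : PR (k + 1) ((D k ω : Dom (k + 1)) : H (k + 1)) =
        ((D k ω : Dom (k + 1)) : H (k + 1)) := by
      refine proj_unique (R (k + 1)) (PR (k + 1)) (hPRmem (k + 1)) (hPRorth (k + 1)) _ _
        hDωR ?_
      simp
    set y : H (k + 1) := ((D k ω : Dom (k + 1)) : H (k + 1)) with hy
    obtain ⟨hιS, hιD⟩ := hι k y hDωR
    -- t := ι y - ωs has D t = 0, t ∈ S, t ⊥ R ⇒ t ∈ K ⇒ t = 0
    have hts : ((ι k y : Dom k) : H k) - s ∈ S k := (S k).sub_mem hιS hsS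
    have htDom : ι k y - ωs = (⟨((ι k y : Dom k) : H k) - s, ((Dom k).sub_mem
      (ι k y).2 hs)⟩ : Dom k) := Subtype.ext rfl
    have htD : D k (ι k y - ωs) = 0 := by
      rw [map_sub, ← hDω]
      apply Subtype.ext
      rw [AddSubgroupClass.coe_sub, hιD]
      simp [hy]
    have htK : ((ι k y : Dom k) : H k) - s ∈ K k := by
      rw [hK k, Submodule.mem_inf]
      constructor
      · exact ⟨ι k y - ωs, htD, by simp [hωs]⟩
      · rw [Submodule.mem_orthogonal]
        intro u hu
        have := hSR k _ hts u hu
        rw [← inner_conj_symm, this, map_zero]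
    have ht0 : ((ι k y : Dom k) : H k) - s = 0 := by
      have := hSK k _ hts _ htK
      rwa [inner_self_eq_zero] at this
    have hιωs : ι k y = ωs := Subtype.ext (by
      have := sub_eq_zero.1 ht0
      simpa [hωs] using this)
    have hPeq : (⟨P k (ω : H k), hKDom k (hPmem k (ω : H k))⟩ : Dom k) = ωh :=
      Subtype.ext hPw
    rw [hPeq, hPRω, hιωs, hsplit, map_add, map_add, hγr]
    abel
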